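/- Let A, B be real numbers with A < B and define S_C(p1, p4) = (A·(1 − p1) + B·p4)/(1 − p1 + p4). Then S_C is strictly increasing in each argument on the region 0 ≤ p1 < 1, 0 < p4 ≤ 1: if 0 ≤ p1 < p1' < 1 and 0 < p4 ≤ 1 then S_C(p1, p4) < S_C(p1', p4), and if 0 ≤ p1 < 1 and 0 < p4 < p4' ≤ 1 then S_C(p1, p4) < S_C(p1, p4'). (Theorem 2: when p4 ≠ 0 and p1 ≠ 1, the pinned expected payoff of the data collector increases as p1 or p4 increases.) -/
import Mathlib


/-- Theorem 2: when `A < B`, the pinned payoff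
`S_C(p1,p4) = (A(1-p1)+B·p4)/(1-p1+p4)` is strictly increasing in each argument
on the region `0 ≤ p1 < 1`, `0 < p4 ≤ 1`. -/
theorem pinned_payoff_monotone
    (A B : ℝ) (hAB : A < B)
    (S : ℝ → ℝ → ℝ)
    (hS : ∀ p1 p4, S p1 p4 = (A * (1 - p1) + B * p4) / (1 - p1 + p4)) :
    (∀ p1 p1' p4 : ℝ, 0 ≤ p1 → p1 < p1' → p1' < 1 → 0 < p4 → p4 ≤ 1 →
      S p1 p4 < S p1' p4) ∧
    (∀ p1 p4 p4' : ℝ, 0 ≤ p1 → p1 < 1 → 0 < p4 → p4 < p4' → p4' ≤ 1 →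
      S p1 p4 < S p1 p4') := by
  constructor
  · intro p1 p1' p4 h0 h1 h2 h3 h4
    rw [hS, hS, div_lt_div_iff₀ (by linarith) (by linarith)]
    nlinarith [mul_pos h3 (sub_pos.mpr h1), sub_pos.mpr hAB]
  · intro p1 p4 p4' h0 h1 h2 h3 h4
    rw [hS, hS, div_lt_div_iff₀ (by linarith) (by linarith)]
    nlinarith [mul_pos (sub_pos.mpr h1) (sub_pos.mpr h3), sub_pos.mpr hAB]
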